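/- Let n, m be positive integers, let V_o : ℝⁿ → ℝ be a nonnegative continuously differentiable function, let f_o : ℝⁿ × ℝᵐ → ℝⁿ, and let α_o, γ_o be class K∞ functions such that ⟨∇V_o(e), f_o(e,d)⟩ ≤ −α_o(V_o(e)) + γ_o(‖d‖) for all e ∈ ℝⁿ, d ∈ ℝᵐ. Let ν : [0,∞) → [0,∞) be continuous and nondecreasing and define ℓ(s) = ∫₀ˢ ν(r) dr. Then for all e ∈ ℝⁿ and d ∈ ℝᵐ, ⟨∇(ℓ ∘ V_o)(e), f_o(e,d)⟩ ≤ −(1/2)·ν(V_o(e))·α_o(V_o(e)) + ν(θ(‖d‖))·γ_o(‖d‖), where θ(s) := α_o⁻¹(2γ_o(s)) and α_o⁻¹ denotes the inverse of the bijection α_o of [0,∞). -/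

import Mathlib

open scoped RealInnerProductSpace

/-- A class `K` function: continuous, strictly increasing on `[0,∞)`, vanishing at `0`. -/
def IsClassK (f : ℝ → ℝ) : Prop :=
  ContinuousOn f (Set.Ici 0) ∧ StrictMonoOn f (Set.Ici 0) ∧ f 0 = 0

/-- A class `K∞` function: a class `K` function that is unbounded. -/
def IsClassKInf (f : ℝ → ℝ) : Prop :=
  IsClassK f ∧ ∀ M : ℝ, ∃ s, 0 ≤ s ∧ M < f s

theorem stmt_1 (n m : ℕ) (hn : 0 < n) (hm : 0 < m)
    (V_o : EuclideanSpace ℝ (Fin n) → ℝ)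
    (hVo_nonneg : ∀ e, 0 ≤ V_o e) (hVo_smooth : ContDiff ℝ 1 V_o)
    (f_o : EuclideanSpace ℝ (Fin n) → EuclideanSpace ℝ (Fin m) → EuclideanSpace ℝ (Fin n))
    (α_o γ_o : ℝ → ℝ) (hα : IsClassKInf α_o) (hγ : IsClassKInf γ_o)
    (hdiss : ∀ e d, ⟪gradient V_o e, f_o e d⟫ ≤ -α_o (V_o e) + γ_o ‖d‖)
    (ν : ℝ → ℝ) (hν_cont : ContinuousOn ν (Set.Ici 0))
    (hν_mono : MonotoneOn ν (Set.Ici 0)) (hν_nonneg : ∀ s, 0 ≤ s → 0 ≤ ν s)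
    -- `θ = α_o⁻¹ ∘ (2 • γ_o)`, i.e. the (unique) nonnegative function with `α_o (θ s) = 2 γ_o s`
    (θ : ℝ → ℝ) (hθ : ∀ s, 0 ≤ s → 0 ≤ θ s ∧ α_o (θ s) = 2 * γ_o s) :
    ∀ e d, ⟪gradient (fun e' => ∫ r in (0:ℝ)..(V_o e'), ν r) e, f_o e d⟫ ≤
      -(1 / 2) * (ν (V_o e) * α_o (V_o e)) + ν (θ ‖d‖) * γ_o ‖d‖ := by
  obtain ⟨⟨hαc, hαm, hα0⟩, hαu⟩ := hα
  obtain ⟨⟨hγc, hγm, hγ0⟩, hγu⟩ := hγ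
  intro e d
  set b := V_o e with hb
  have hb0 : (0:ℝ) ≤ b := hVo_nonneg e
  have hd0 : (0:ℝ) ≤ ‖d‖ := norm_nonneg d
  obtain ⟨hθ0, hθeq⟩ := hθ ‖d‖ hd0
  have hA0 : 0 ≤ α_o b := by
    have := hαm.monotoneOn Set.self_mem_Ici (Set.mem_Ici.2 hb0) hb0
    rwa [hα0] at this
  have hG0 : 0 ≤ γ_o ‖d‖ := by
    have := hγm.monotoneOn Set.self_mem_Ici (Set.mem_Ici.2 hd0) hd0
    rwa [hγ0] at this
  have hνb : 0 ≤ ν b := hν_nonneg b hb0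
  have hνθ : 0 ≤ ν (θ ‖d‖) := hν_nonneg _ hθ0
  -- measurability of ν on Ici 0
  have hmeasν : MeasureTheory.AEStronglyMeasurable ν
      (MeasureTheory.volume.restrict (Set.Ici (0:ℝ))) :=
    hν_cont.aestronglyMeasurable measurableSet_Ici
  have hint : IntervalIntegrable ν MeasureTheory.volume 0 b := by
    apply ContinuousOn.intervalIntegrable
    rw [Set.uIcc_of_le hb0]
    exact hν_cont.mono Set.Icc_subset_Ici_self
  -- the rescaling function ℓ has one-sided derivative ν b at b within [0,∞)
  have hℓ : HasDerivWithinAt (fun u => ∫ r in (0:ℝ)..u, ν r) (ν b) (Set.Ici 0) b := by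
    rcases eq_or_lt_of_le hb0 with h0 | h0
    · rw [← h0]
      rw [← h0] at hint
      exact intervalIntegral.integral_hasDerivWithinAt_right (t := Set.Ioi 0) hint
        ⟨Set.Ici 0, Filter.mem_of_superset self_mem_nhdsWithin Set.Ioi_subset_Ici_self, hmeasν⟩
        ((hν_cont 0 Set.self_mem_Ici).mono Set.Ioi_subset_Ici_self)
    · have hIci : Set.Ici (0:ℝ) ∈ nhds b :=
        Filter.mem_of_superset (Ioi_mem_nhds h0) Set.Ioi_subset_Ici_self
      exact (intervalIntegral.integral_hasDerivAt_right hint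
        ⟨Set.Ici 0, hIci, hmeasν⟩
        (hν_cont.continuousAt hIci)).hasDerivWithinAt
  have hV : HasFDerivAt V_o (fderiv ℝ V_o e) e :=
    ((hVo_smooth.differentiable one_ne_zero) e).hasFDerivAt
  have hg : HasFDerivAt (fun e' => ∫ r in (0:ℝ)..(V_o e'), ν r)
      (ν b • fderiv ℝ V_o e) e := by
    rw [← hasFDerivWithinAt_univ]
    exact hℓ.comp_hasFDerivWithinAt e hV.hasFDerivWithinAt (fun x _ => hVo_nonneg x)
  have hgrad : gradient (fun e' => ∫ r in (0:ℝ)..(V_o e'), ν r) e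
      = ν b • gradient V_o e := by
    unfold gradient
    rw [hg.fderiv, map_smul]
  rw [hgrad, real_inner_smul_left]
  have hkey : ν b * ⟪gradient V_o e, f_o e d⟫ ≤ ν b * (-α_o b + γ_o ‖d‖) :=
    mul_le_mul_of_nonneg_left (hdiss e d) hνb
  refine hkey.trans ?_
  rcases le_or_gt (2 * γ_o ‖d‖) (α_o b) with h | h
  · nlinarith [mul_nonneg hνθ hG0,
      mul_le_mul_of_nonneg_left (by linarith : -α_o b + γ_o ‖d‖ ≤ -(1/2) * α_o b) hνb]
  · have hbθ : b ≤ θ ‖d‖ := by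
      by_contra hc
      push_neg at hc
      have := hαm.monotoneOn (Set.mem_Ici.2 hθ0) (Set.mem_Ici.2 hb0) hc.le
      rw [hθeq] at this
      linarith
    have hνbθ : ν b ≤ ν (θ ‖d‖) :=
      hν_mono (Set.mem_Ici.2 hb0) (Set.mem_Ici.2 hθ0) hbθ
    nlinarith [mul_nonneg (sub_nonneg.2 hνbθ) (by linarith : (0:ℝ) ≤ 2 * γ_o ‖d‖ - α_o b),
      mul_nonneg hνθ hA0]
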